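/- arXiv:1304.6659 — 2 statements merged into one kernel-verified Lean document; each statement's English description precedes it below -/
import Mathlib

section
/- Let A be the 3×5 integer matrix with rows (1,0,0,0,1), (2,1,1,0,−3), (−3,0,−1,−1,0) (the windmill example with variables a = shaft power P, b = diameter D, c = wind speed V, d = rotational speed n, e = air density ρ). Then the toric ideal I_A ⊆ ℚ[a,b,c,d,e] equals the ideal generated by the four binomials b d − c, b² c³ e − a, c⁵ e − a d², and b c⁴ e − a d. -/
open MvPolynomial

/-- The monomial `x^u = ∏ i, x i ^ u i` in `ℚ[x_1,…,x_n]`. -/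
noncomputable def monoP {n : ℕ} (u : Fin n → ℕ) : MvPolynomial (Fin n) ℚ :=
  ∏ i, X i ^ u i

/-- The ℚ-algebra homomorphism `φ_A : ℚ[x_1,…,x_n] → ℚ[t_1^{±1},…,t_d^{±1}]`
(the group algebra of `ℤ^d` over `ℚ`) sending `x_i` to `t^{a_i}`, where
`a_i` is the `i`-th column of the integer matrix `A`. -/
noncomputable def phi {d n : ℕ} (A : Matrix (Fin d) (Fin n) ℤ) :
    MvPolynomial (Fin n) ℚ →ₐ[ℚ] AddMonoidAlgebra ℚ (Fin d → ℤ) :=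
  MvPolynomial.aeval fun i => AddMonoidAlgebra.single (fun j => A j i) (1 : ℚ)

/-- The toric ideal `I_A ⊆ ℚ[x_1,…,x_n]`: the kernel of `φ_A`. -/
noncomputable def toricIdeal {d n : ℕ} (A : Matrix (Fin d) (Fin n) ℤ) :
    Ideal (MvPolynomial (Fin n) ℚ) :=
  RingHom.ker (phi A)

/-- The windmill matrix: rows `(1,0,0,0,1)`, `(2,1,1,0,-3)`, `(-3,0,-1,-1,0)`;
variables `a` = shaft power `P`, `b` = diameter `D`, `c` = wind speed `V`,
`d` = rotational speed `n`, `e` = air density `ρ`. -/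
noncomputable def Awind : Matrix (Fin 3) (Fin 5) ℤ :=
  !![1, 0, 0, 0, 1; 2, 1, 1, 0, -3; -3, 0, -1, -1, 0]

/-! ### Auxiliary machinery -/

lemma phi_X {d n : ℕ} (A : Matrix (Fin d) (Fin n) ℤ) (i : Fin n) :
    phi A (X i) = AddMonoidAlgebra.single (fun j => A j i) 1 := by
  simp [phi]

lemma phi_monomial {d n : ℕ} (A : Matrix (Fin d) (Fin n) ℤ) (u : Fin n →₀ ℕ) (c : ℚ) :
    phi A (monomial u c)
      = AddMonoidAlgebra.single (fun j => ∑ i, (u i : ℤ) * A j i) c := by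
  induction u using Finsupp.induction with
  | zero =>
    simp [phi, MvPolynomial.monomial_zero', AddMonoidAlgebra.coe_algebraMap]
    rfl
  | single_add i k u hiu hk ih =>
    have h1 : monomial (Finsupp.single i k + u) c = X i ^ k * monomial u c := by
      rw [X_pow_eq_monomial, monomial_mul, one_mul]
    rw [h1, map_mul, map_pow, phi_X, ih, AddMonoidAlgebra.single_pow,
      AddMonoidAlgebra.single_mul_single, one_pow, one_mul]
    congr 1
    funext j
    have : ∀ i' : Fin n, ((Finsupp.single i k + u) i' : ℤ) * A j i'
        = (if i = i' then (k : ℤ) * A j i' else 0) + (u i' : ℤ) * A j i' := by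
      intro i'
      simp [Finsupp.single_apply]
      split <;> ring
    simp only [Pi.add_apply, this, Finset.sum_add_distrib, Finset.sum_ite_eq,
      Finset.mem_univ, if_pos]
    simp [nsmul_eq_mul]

/-- The 3×3 submatrix of `Awind` on columns 1, 3, 4; it is invertible over `ℤ`. -/
noncomputable def Bmat : Matrix (Fin 3) (Fin 3) ℤ := !![0,0,1; 1,0,-3; 0,-1,0]

lemma fB_inj {u v : Fin 3 →₀ ℕ}
    (h : (fun j => ∑ i, (u i : ℤ) * Bmat j i) = (fun j => ∑ i, (v i : ℤ) * Bmat j i)) :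
    u = v := by
  have h0 := congrFun h 0
  have h1 := congrFun h 1
  have h2 := congrFun h 2
  simp [Bmat, Fin.sum_univ_three] at h0 h1 h2
  have e0 : u 0 = v 0 := by omega
  have e1 : u 1 = v 1 := by omega
  have e2 : u 2 = v 2 := by omega
  ext i
  fin_cases i
  · exact e0
  · exact e1
  · exact e2

lemma phiB_inj (p : MvPolynomial (Fin 3) ℚ) (hp : phi Bmat p = 0) : p = 0 := by
  have key : ∀ u : Fin 3 →₀ ℕ, coeff u p = 0 := by
    intro u
    by_cases hu : u ∈ p.support
    · have hsum : (∑ v ∈ p.support,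
          (AddMonoidAlgebra.single (fun j => ∑ i, (v i : ℤ) * Bmat j i) (coeff v p)
            : AddMonoidAlgebra ℚ (Fin 3 → ℤ))) = 0 := by
        rw [← hp]
        conv_rhs => rw [← support_sum_monomial_coeff p]
        rw [map_sum]
        exact Finset.sum_congr rfl fun v _ => (phi_monomial Bmat v (coeff v p)).symm
      have key2 := congrArg (fun f : AddMonoidAlgebra ℚ (Fin 3 → ℤ) =>
        f.coeff (fun j => ∑ i, (u i : ℤ) * Bmat j i)) hsum
      rw [AddMonoidAlgebra.coeff_sum, Finsupp.finset_sum_apply] at key2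
      simp only [AddMonoidAlgebra.coeff_zero, Finsupp.coe_zero, Pi.zero_apply] at key2
      rw [Finset.sum_eq_single u] at key2
      · simpa [AddMonoidAlgebra.coeff_single_apply] using key2
      · intro v hv hvu
        rw [AddMonoidAlgebra.coeff_single_apply, if_neg]
        exact fun hc => hvu (fB_inj hc)
      · intro h; exact absurd hu h
    · simpa using hu
  ext u
  simp [key u]

/-- The target ideal. -/
noncomputable def Jwind : Ideal (MvPolynomial (Fin 5) ℚ) :=
  Ideal.span ({ X 1 * X 3 - X 2,
         X 1 ^ 2 * X 2 ^ 3 * X 4 - X 0,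
         X 2 ^ 5 * X 4 - X 0 * X 3 ^ 2,
         X 1 * X 2 ^ 4 * X 4 - X 0 * X 3 } : Set (MvPolynomial (Fin 5) ℚ))

lemma g1_mem : X 1 * X 3 - X 2 ∈ Jwind := Ideal.subset_span (by simp)
lemma g2_mem : X 1 ^ 2 * X 2 ^ 3 * X 4 - X 0 ∈ Jwind := Ideal.subset_span (by simp)

/-- The substitution `a ↦ b⁵d³e`, `c ↦ bd` (fixing `b, d, e`). -/
noncomputable def sigma5 : MvPolynomial (Fin 5) ℚ →ₐ[ℚ] MvPolynomial (Fin 5) ℚ :=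
  aeval ![X 1 ^ 5 * X 3 ^ 3 * X 4, X 1, X 1 * X 3, X 3, X 4]

/-- The same substitution, landing in `ℚ[y₀,y₁,y₂]`. -/
noncomputable def rho5 : MvPolynomial (Fin 5) ℚ →ₐ[ℚ] MvPolynomial (Fin 3) ℚ :=
  aeval ![X 0 ^ 5 * X 1 ^ 3 * X 2, X 0, X 0 * X 1, X 1, X 2]

noncomputable def emb : Fin 3 → Fin 5 := ![1, 3, 4]

lemma sigma5_eq (p : MvPolynomial (Fin 5) ℚ) : sigma5 p = rename emb (rho5 p) := by
  have h : sigma5 = (rename emb : MvPolynomial (Fin 3) ℚ →ₐ[ℚ] _).comp rho5 := by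
    apply MvPolynomial.algHom_ext
    intro i
    fin_cases i <;> simp [sigma5, rho5, emb]
  rw [h]; rfl

lemma phi_rename (q : MvPolynomial (Fin 3) ℚ) :
    phi Awind (rename emb q) = phi Bmat q := by
  have h : (phi Awind).comp (rename emb : MvPolynomial (Fin 3) ℚ →ₐ[ℚ] _) = phi Bmat := by
    apply MvPolynomial.algHom_ext
    intro i
    rw [AlgHom.comp_apply, rename_X, phi_X, phi_X]
    congr 1
    funext j
    fin_cases i <;> fin_cases j <;> simp [Awind, Bmat, emb]
  rw [← h]; rfl

lemma sigma5_X_mem : ∀ i : Fin 5, X i - sigma5 (X i) ∈ Jwind := by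
  intro i
  fin_cases i
  · show X (0:Fin 5) - sigma5 (X (0:Fin 5)) ∈ Jwind
    have hs : sigma5 (X (0 : Fin 5)) = X 1 ^ 5 * X 3 ^ 3 * X 4 := by simp [sigma5]
    rw [hs]
    have h : (X 0 - X 1 ^ 5 * X 3 ^ 3 * X 4 : MvPolynomial (Fin 5) ℚ)
        = (-(X 1 ^ 2 * X 4 * (X 1 ^ 2 * X 3 ^ 2 + X 1 * X 3 * X 2 + X 2 ^ 2)))
            * (X 1 * X 3 - X 2)
          + (-1) * (X 1 ^ 2 * X 2 ^ 3 * X 4 - X 0) := by ring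
    rw [h]
    exact add_mem (Ideal.mul_mem_left _ _ g1_mem) (Ideal.mul_mem_left _ _ g2_mem)
  · show X (1:Fin 5) - sigma5 (X (1:Fin 5)) ∈ Jwind
    have hs : sigma5 (X (1 : Fin 5)) = X 1 := by simp [sigma5]
    rw [hs, sub_self]; exact zero_mem _
  · show X (2:Fin 5) - sigma5 (X (2:Fin 5)) ∈ Jwind
    have hs : sigma5 (X (2 : Fin 5)) = X 1 * X 3 := by simp [sigma5]
    rw [hs]
    have h : (X 2 - X 1 * X 3 : MvPolynomial (Fin 5) ℚ) = (-1) * (X 1 * X 3 - X 2) := by ring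
    rw [h]
    exact Ideal.mul_mem_left _ _ g1_mem
  · show X (3:Fin 5) - sigma5 (X (3:Fin 5)) ∈ Jwind
    have hs : sigma5 (X (3 : Fin 5)) = X 3 := by simp [sigma5]
    rw [hs, sub_self]; exact zero_mem _
  · show X (4:Fin 5) - sigma5 (X (4:Fin 5)) ∈ Jwind
    have hs : sigma5 (X (4 : Fin 5)) = X 4 := by simp [sigma5]
    rw [hs, sub_self]; exact zero_mem _

lemma sub_sigma5_mem (p : MvPolynomial (Fin 5) ℚ) : p - sigma5 p ∈ Jwind := by
  induction p using MvPolynomial.induction_on with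
  | C a => simp [sigma5]
  | add p q hp hq =>
    have h : p + q - sigma5 (p + q) = (p - sigma5 p) + (q - sigma5 q) := by
      rw [map_add]; ring
    rw [h]; exact add_mem hp hq
  | mul_X p i hp =>
    have h : p * X i - sigma5 (p * X i)
        = (p - sigma5 p) * X i + sigma5 p * (X i - sigma5 (X i)) := by
      rw [map_mul]; ring
    rw [h]
    exact add_mem (Ideal.mul_mem_right _ _ hp) (Ideal.mul_mem_left _ _ (sigma5_X_mem i))

lemma ker1 : phi Awind (X 1 * X 3 - X 2) = 0 := by
  simp only [map_sub, map_mul, map_pow, phi_X, AddMonoidAlgebra.single_pow,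
    AddMonoidAlgebra.single_mul_single, one_pow, one_mul, mul_one]
  rw [sub_eq_zero]
  congr 1
  funext j
  fin_cases j <;> simp [Awind, Matrix.vecHead, Matrix.vecTail, Pi.mul_apply, Pi.smul_apply]

lemma ker2 : phi Awind (X 1 ^ 2 * X 2 ^ 3 * X 4 - X 0) = 0 := by
  simp only [map_sub, map_mul, map_pow, phi_X, AddMonoidAlgebra.single_pow,
    AddMonoidAlgebra.single_mul_single, one_pow, one_mul, mul_one]
  rw [sub_eq_zero]
  congr 1
  funext j
  fin_cases j <;> simp [Awind, Matrix.vecHead, Matrix.vecTail, Pi.mul_apply, Pi.smul_apply]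

lemma ker3 : phi Awind (X 2 ^ 5 * X 4 - X 0 * X 3 ^ 2) = 0 := by
  simp only [map_sub, map_mul, map_pow, phi_X, AddMonoidAlgebra.single_pow,
    AddMonoidAlgebra.single_mul_single, one_pow, one_mul, mul_one]
  rw [sub_eq_zero]
  congr 1
  funext j
  fin_cases j <;> simp [Awind, Matrix.vecHead, Matrix.vecTail, Pi.mul_apply, Pi.smul_apply]

lemma ker4 : phi Awind (X 1 * X 2 ^ 4 * X 4 - X 0 * X 3) = 0 := by
  simp only [map_sub, map_mul, map_pow, phi_X, AddMonoidAlgebra.single_pow,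
    AddMonoidAlgebra.single_mul_single, one_pow, one_mul, mul_one]
  rw [sub_eq_zero]
  congr 1
  funext j
  fin_cases j <;> simp [Awind, Matrix.vecHead, Matrix.vecTail, Pi.mul_apply, Pi.smul_apply]

lemma Jwind_le : Jwind ≤ toricIdeal Awind := by
  rw [Jwind, Ideal.span_le]
  rintro f hf
  simp only [Set.mem_insert_iff, Set.mem_singleton_iff] at hf
  rcases hf with h | h | h | h <;> subst h <;>
    simp only [SetLike.mem_coe, toricIdeal, RingHom.mem_ker]
  · exact ker1
  · exact ker2
  · exact ker3
  · exact ker4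

/-- The toric ideal of the windmill matrix is generated by the
four binomials `b d - c`, `b² c³ e - a`, `c⁵ e - a d²` and `b c⁴ e - a d`. -/
theorem toricIdeal_windmill :
    toricIdeal Awind = Ideal.span
      ({ X 1 * X 3 - X 2,
         X 1 ^ 2 * X 2 ^ 3 * X 4 - X 0,
         X 2 ^ 5 * X 4 - X 0 * X 3 ^ 2,
         X 1 * X 2 ^ 4 * X 4 - X 0 * X 3 } : Set (MvPolynomial (Fin 5) ℚ)) := by
  show toricIdeal Awind = Jwind
  apply le_antisymm _ Jwind_le
  intro p hp
  have hker : phi Awind p = 0 := hp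
  have h1 : p - sigma5 p ∈ Jwind := sub_sigma5_mem p
  have h2 : phi Awind (sigma5 p) = 0 := by
    have h3 : phi Awind (p - sigma5 p) = 0 := Jwind_le h1
    rw [map_sub, hker, zero_sub, neg_eq_zero] at h3
    exact h3
  have h4 : phi Bmat (rho5 p) = 0 := by
    rw [← phi_rename, ← sigma5_eq]; exact h2
  have h5 : sigma5 p = 0 := by
    rw [sigma5_eq, phiB_inj _ h4, map_zero]
  have : p = p - sigma5 p := by rw [h5, sub_zero]
  rw [this]
  exact h1
end

section
/- Let A be the 4×5 integer matrix with rows (0,1,−1,1,1), (0,2,−2,2,2), (1,−3,4,−2,−3), (1,−1,2,−2,−2), with variables a,b,c,d,e. Then each of the three binomials b c − a, d − c e², and b d − a e² is a primitive element of the toric ideal I_A ⊆ ℚ[a,b,c,d,e]. -/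
open MvPolynomial

/-- `x^u - x^v` is a primitive binomial of the toric ideal `I_A`:
it lies in `I_A`, `u ≠ v`, and there is no binomial `x^{u'} - x^{v'} ∈ I_A`
with `u' ≠ v'`, `(u',v') ≠ (u,v)`, `u' ≤ u` and `v' ≤ v` componentwise. -/
def IsPrimitiveBinomial {d n : ℕ} (A : Matrix (Fin d) (Fin n) ℤ)
    (u v : Fin n → ℕ) : Prop :=
  u ≠ v ∧ monoP u - monoP v ∈ toricIdeal A ∧
    ∀ u' v' : Fin n → ℕ, u' ≠ v' → (u', v') ≠ (u, v) →
      monoP u' - monoP v' ∈ toricIdeal A → ¬(u' ≤ u ∧ v' ≤ v)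

/-- The electrodynamics matrix: rows `(0,1,-1,1,1)`, `(0,2,-2,2,2)`,
`(1,-3,4,-2,-3)`, `(1,-1,2,-2,-2)`; variables `a, b, c, d, e`. -/
noncomputable def Aelec : Matrix (Fin 4) (Fin 5) ℤ :=
  !![0, 1, -1, 1, 1; 0, 2, -2, 2, 2; 1, -3, 4, -2, -3; 1, -1, 2, -2, -2]

lemma phi_monoP {d n : ℕ} (A : Matrix (Fin d) (Fin n) ℤ) (u : Fin n → ℕ) :
    phi A (monoP u) =
      AddMonoidAlgebra.single (fun j => ∑ i, (u i : ℤ) * A j i) (1 : ℚ) := by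
  unfold monoP phi
  rw [map_prod]
  simp only [map_pow, MvPolynomial.aeval_X, AddMonoidAlgebra.single_pow, one_pow]
  rw [AddMonoidAlgebra.prod_single]
  congr 1
  · funext j
    simp [Finset.sum_apply, mul_comm]
  · simp

lemma mem_toricIdeal_iff {d n : ℕ} (A : Matrix (Fin d) (Fin n) ℤ) (u v : Fin n → ℕ) :
    monoP u - monoP v ∈ toricIdeal A ↔
      ∀ j, ∑ i, (u i : ℤ) * A j i = ∑ i, (v i : ℤ) * A j i := by
  rw [toricIdeal, RingHom.mem_ker, map_sub, sub_eq_zero, phi_monoP, phi_monoP]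
  constructor
  · intro h j
    have := (AddMonoidAlgebra.single_left_inj (one_ne_zero (α := ℚ))).mp h
    exact congrFun this j
  · intro h
    congr 1
    funext j
    exact h j

/-- Each of the three binomials `b c - a`, `d - c e²` and
`b d - a e²` is a primitive element of the toric ideal of the electrodynamics
matrix. -/
theorem electrodynamics_primitive_binomials :
    IsPrimitiveBinomial Aelec ![0, 1, 1, 0, 0] ![1, 0, 0, 0, 0] ∧
    IsPrimitiveBinomial Aelec ![0, 0, 0, 1, 0] ![0, 0, 1, 0, 2] ∧
    IsPrimitiveBinomial Aelec ![0, 1, 0, 1, 0] ![1, 0, 0, 0, 2] := by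
  refine ⟨⟨?_, ?_, ?_⟩, ⟨?_, ?_, ?_⟩, ⟨?_, ?_, ?_⟩⟩
  · intro h; have := congrFun h 0; simp at this
  · rw [mem_toricIdeal_iff]; intro j; fin_cases j <;>
      simp [Aelec, Fin.sum_univ_five]
  · intro u' v' hne hne2 hmem ⟨hu, hv⟩
    rw [mem_toricIdeal_iff] at hmem
    have e1 := hmem 0; have e3 := hmem 2; have e4 := hmem 3
    simp [Aelec, Fin.sum_univ_five] at e1 e3 e4
    have b0 := hu 0; have b1 := hu 1; have b2 := hu 2
    have b3 := hu 3; have b4 := hu 4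
    have c0 := hv 0; have c1 := hv 1; have c2 := hv 2
    have c3 := hv 3; have c4 := hv 4
    simp at b0 b1 b2 b3 b4 c0 c1 c2 c3 c4
    by_cases h : u' 1 = 0
    · exact hne (funext fun i => match i with
        | 0 => by omega | 1 => by omega | 2 => by omega
        | 3 => by omega | 4 => by omega)
    · refine hne2 (Prod.ext ?_ ?_) <;>
        refine funext fun i => ?_ <;>
        exact match i with
        | 0 => by simp; omega | 1 => by simp; omega | 2 => by simp; omega
        | 3 => by simp; omega | 4 => by simp; omega
  · intro h; have := congrFun h 2; simp at this
  · rw [mem_toricIdeal_iff]; intro j; fin_cases j <;>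
      simp [Aelec, Fin.sum_univ_five]
  · intro u' v' hne hne2 hmem ⟨hu, hv⟩
    rw [mem_toricIdeal_iff] at hmem
    have e1 := hmem 0; have e3 := hmem 2; have e4 := hmem 3
    simp [Aelec, Fin.sum_univ_five] at e1 e3 e4
    have b0 := hu 0; have b1 := hu 1; have b2 := hu 2
    have b3 := hu 3; have b4 := hu 4
    have c0 := hv 0; have c1 := hv 1; have c2 := hv 2
    have c3 := hv 3; have c4 := hv 4
    simp at b0 b1 b2 b3 b4 c0 c1 c2 c3 c4
    by_cases h : u' 3 = 0
    · exact hne (funext fun i => match i with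
        | 0 => by omega | 1 => by omega | 2 => by omega
        | 3 => by omega | 4 => by omega)
    · refine hne2 (Prod.ext ?_ ?_) <;>
        refine funext fun i => ?_ <;>
        exact match i with
        | 0 => by simp; omega | 1 => by simp; omega | 2 => by simp; omega
        | 3 => by simp; omega | 4 => by simp; omega
  · intro h; have := congrFun h 1; simp at this
  · rw [mem_toricIdeal_iff]; intro j; fin_cases j <;>
      simp [Aelec, Fin.sum_univ_five]
  · intro u' v' hne hne2 hmem ⟨hu, hv⟩
    rw [mem_toricIdeal_iff] at hmem
    have e1 := hmem 0; have e3 := hmem 2; have e4 := hmem 3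
    simp [Aelec, Fin.sum_univ_five] at e1 e3 e4
    have b0 := hu 0; have b1 := hu 1; have b2 := hu 2
    have b3 := hu 3; have b4 := hu 4
    have c0 := hv 0; have c1 := hv 1; have c2 := hv 2
    have c3 := hv 3; have c4 := hv 4
    simp at b0 b1 b2 b3 b4 c0 c1 c2 c3 c4
    by_cases h : u' 1 = 0
    · exact hne (funext fun i => match i with
        | 0 => by omega | 1 => by omega | 2 => by omega
        | 3 => by omega | 4 => by omega)
    · refine hne2 (Prod.ext ?_ ?_) <;>
        refine funext fun i => ?_ <;>
        exact match i with
        | 0 => by simp; omega | 1 => by simp; omega | 2 => by simp; omega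
        | 3 => by simp; omega | 4 => by simp; omega
end
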